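/- Let r ≥ 4, let H be an r-uniform hypergraph, and let G be the simple graph obtained from H by replacing each hyperedge by a clique on its vertex set. If G contains a clique on a set h of r vertices such that h is not a hyperedge of H, then H contains an avoidable configuration, i.e., a connected subhypergraph C with n(C) ≥ 2 and at most C(r,2) hyperedges. -/

import Mathlib

/-- A (finite) hypergraph: a finite vertex set together with a finite set of hyperedges,
each a subset of the vertex set. -/
structure FinHypergraph (V : Type*) where
  verts : Finset V
  edges : Finset (Finset V)
  subset_verts : ∀ e ∈ edges, e ⊆ verts

namespace FinHypergraph

variable {V : Type*}

/-- `H` is `r`-uniform: every hyperedge has exactly `r` vertices. -/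
def Uniform (r : ℕ) (H : FinHypergraph V) : Prop := ∀ e ∈ H.edges, e.card = r

/-- The graph on the vertices in which two distinct vertices are adjacent iff they lie in a
common hyperedge. -/
def assoc (H : FinHypergraph V) : SimpleGraph V where
  Adj u v := u ≠ v ∧ ∃ e ∈ H.edges, u ∈ e ∧ v ∈ e
  symm := by
    constructor
    rintro u v ⟨h1, e, he, hu, hv⟩
    exact ⟨h1.symm, e, he, hv, hu⟩
  loopless := by constructor; rintro u ⟨h1, -⟩; exact h1 rfl

/-- The number of connected components of `H` (isolated vertices of `verts` count). -/
noncomputable def componentCount (H : FinHypergraph V) : ℕ :=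
  Set.ncard ((fun v => H.assoc.connectedComponentMk v) '' ↑H.verts)

/-- The nullity `n(H) = (r-1)e(H) + c(H) - |H|` of an `r`-uniform hypergraph. -/
noncomputable def nullity (r : ℕ) (H : FinHypergraph V) : ℤ :=
  ((r : ℤ) - 1) * H.edges.card + H.componentCount - H.verts.card

/-- `H` is connected: nonempty, and any two vertices are joined by a path of hyperedges. -/
def Connected (H : FinHypergraph V) : Prop :=
  H.verts.Nonempty ∧ ∀ u ∈ H.verts, ∀ v ∈ H.verts, H.assoc.Reachable u v

/-- The nullity `n(H) = (r-1)e(H) + 1 - |H|` of a connected `r`-uniform hypergraph. -/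
def nullity1 (r : ℕ) (H : FinHypergraph V) : ℤ :=
  ((r : ℤ) - 1) * H.edges.card + 1 - H.verts.card

end FinHypergraph

/-- Lemma 2.2: let `r ≥ 4`, let `H` be an `r`-uniform hypergraph and `G` the
graph obtained by replacing each hyperedge by a clique.  If `G` contains a clique on an
`r`-set `h` which is not a hyperedge of `H`, then `H` contains an avoidable configuration:
a connected subhypergraph `C` with nullity `≥ 2` and at most `C(r,2)` hyperedges. -/
lemma two_mul_choose_two (n : ℕ) : 2 * n.choose 2 = n * (n - 1) := by
  induction n with
  | zero => rfl
  | succ n ih =>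
    rw [Nat.choose_succ_succ, Nat.choose_one_right, Nat.mul_add, ih]
    cases n with
    | zero => rfl
    | succ m => simp only [Nat.succ_sub_one]; ring

lemma aux_strict (b k : ℕ) (hb : 2 ≤ b) (hk : b + 1 ≤ k) :
    b * (b - 1) + 1 ≤ k * (b - 1) := by
  obtain ⟨b', rfl⟩ := Nat.exists_eq_add_of_le hb
  have h1 : (2 + b') - 1 = 1 + b' := by omega
  rw [h1]
  calc (2 + b') * (1 + b') + 1 ≤ (2 + b') * (1 + b') + (1 + b') := by omega
    _ = (3 + b') * (1 + b') := by ring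
    _ ≤ k * (1 + b') := Nat.mul_le_mul_right _ (by omega)

theorem stmt_8 {V : Type*} [DecidableEq V] (r : ℕ) (hr : 4 ≤ r) (H : FinHypergraph V)
    (hu : H.Uniform r) (h : Finset V) (hcard : h.card = r) (hnot : h ∉ H.edges)
    (hclique : ∀ u ∈ h, ∀ v ∈ h, u ≠ v → ∃ e ∈ H.edges, u ∈ e ∧ v ∈ e) :
    ∃ C : FinHypergraph V, C.edges ⊆ H.edges ∧ C.verts = C.edges.sup id ∧
      C.Connected ∧ C.edges.card ≤ r.choose 2 ∧ 2 ≤ C.nullity1 r := by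
  classical
  set P : Finset (Finset V) := Finset.powersetCard 2 h with hP
  have hPcard : P.card = r.choose 2 := by
    rw [hP, Finset.card_powersetCard, hcard]
  have hex : ∀ p ∈ P, ∃ e ∈ H.edges, p ⊆ e := by
    intro p hp
    rw [hP, Finset.mem_powersetCard] at hp
    obtain ⟨hph, hp2⟩ := hp
    obtain ⟨u, v, huv, rfl⟩ := Finset.card_eq_two.mp hp2
    obtain ⟨e, he, hue, hve⟩ := hclique u (hph (by simp)) v (hph (by simp)) huv
    exact ⟨e, he, by simp [Finset.insert_subset_iff, hue, hve]⟩
  choose! f hf1 hf2 using hex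
  set E : Finset (Finset V) := P.image f with hE
  set a : Finset V → ℕ := fun e => (e ∩ h).card with ha
  set g : Finset V → Finset (Finset V) := fun e => Finset.powersetCard 2 (e ∩ h) with hg
  -- basic facts about edges of E
  have hEmem : ∀ e ∈ E, e ∈ H.edges := by
    intro e he
    obtain ⟨p, hp, rfl⟩ := Finset.mem_image.mp he
    exact hf1 p hp
  have hEcard : ∀ e ∈ E, e.card = r := fun e he => hu e (hEmem e he)
  have ha2 : ∀ e ∈ E, 2 ≤ a e := by
    intro e he
    obtain ⟨p, hp, rfl⟩ := Finset.mem_image.mp he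
    have hp' := Finset.mem_powersetCard.mp hp
    have hpsub : p ⊆ f p ∩ h := Finset.subset_inter (hf2 p hp) hp'.1
    calc 2 = p.card := hp'.2.symm
      _ ≤ (f p ∩ h).card := Finset.card_le_card hpsub
  have haub : ∀ e ∈ E, a e ≤ r - 1 := by
    intro e he
    have hne : e ≠ h := fun heq => hnot (heq ▸ hEmem e he)
    have h1 : a e ≤ r := by
      calc a e ≤ e.card := Finset.card_le_card Finset.inter_subset_left
        _ = r := hEcard e he
    rcases Nat.lt_or_ge (a e) r with hlt | hge
    · omega
    · exfalso
      have heq1 : e ∩ h = e := Finset.eq_of_subset_of_card_le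
        Finset.inter_subset_left (by rw [hEcard e he]; exact hge)
      have hsub : e ⊆ h := heq1 ▸ Finset.inter_subset_right
      exact hne (Finset.eq_of_subset_of_card_le hsub (by rw [hEcard e he, hcard]))
  -- pair coverage
  have hPsub : P ⊆ E.biUnion g := by
    intro p hp
    have hp' := Finset.mem_powersetCard.mp hp
    refine Finset.mem_biUnion.mpr ⟨f p, Finset.mem_image_of_mem f hp, ?_⟩
    exact Finset.mem_powersetCard.mpr ⟨Finset.subset_inter (hf2 p hp) hp'.1, hp'.2⟩
  have hgcard : ∀ e, (g e).card = (a e).choose 2 := fun e => Finset.card_powersetCard 2 (e ∩ h)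
  have h1 : r.choose 2 ≤ ∑ e ∈ E, (a e).choose 2 := by
    calc r.choose 2 = P.card := hPcard.symm
      _ ≤ (E.biUnion g).card := Finset.card_le_card hPsub
      _ ≤ ∑ e ∈ E, (g e).card := Finset.card_biUnion_le
      _ = ∑ e ∈ E, (a e).choose 2 := Finset.sum_congr rfl fun e _ => hgcard e
  -- the key numeric claim
  set S : ℕ := ∑ e ∈ E, (a e - 1) with hSdef
  have h2 : ∀ e ∈ E, 2 * (a e).choose 2 ≤ (r - 1) * (a e - 1) := by
    intro e he
    rw [two_mul_choose_two]
    exact Nat.mul_le_mul_right _ (haub e he)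
  have h3 : r * (r - 1) ≤ (r - 1) * S := by
    calc r * (r - 1) = 2 * r.choose 2 := (two_mul_choose_two r).symm
      _ ≤ 2 * ∑ e ∈ E, (a e).choose 2 := Nat.mul_le_mul_left 2 h1
      _ = ∑ e ∈ E, 2 * (a e).choose 2 := by rw [Finset.mul_sum]
      _ ≤ ∑ e ∈ E, (r - 1) * (a e - 1) := Finset.sum_le_sum h2
      _ = (r - 1) * S := by rw [hSdef, Finset.mul_sum]
  have hSr : r ≤ S := by
    have h4 : r * (r - 1) ≤ S * (r - 1) := by
      calc r * (r - 1) ≤ (r - 1) * S := h3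
        _ = S * (r - 1) := Nat.mul_comm _ _
    exact Nat.le_of_mul_le_mul_right h4 (by omega)
  have hSne : S ≠ r := by
    intro hSeq
    -- all intersections have size r - 1
    have hall : ∀ e ∈ E, a e = r - 1 := by
      intro e0 he0
      by_contra hne
      have hb : a e0 + 1 ≤ r - 1 := by have := haub e0 he0; omega
      have hstrict : 2 * (a e0).choose 2 < (r - 1) * (a e0 - 1) := by
        rw [two_mul_choose_two]
        have := aux_strict (a e0) (r - 1) (ha2 e0 he0) hb
        omega
      have hlt : ∑ e ∈ E, 2 * (a e).choose 2 < ∑ e ∈ E, (r - 1) * (a e - 1) :=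
        Finset.sum_lt_sum h2 ⟨e0, he0, hstrict⟩
      have hA : r * (r - 1) ≤ ∑ e ∈ E, 2 * (a e).choose 2 := by
        calc r * (r - 1) = 2 * r.choose 2 := (two_mul_choose_two r).symm
          _ ≤ 2 * ∑ e ∈ E, (a e).choose 2 := Nat.mul_le_mul_left 2 h1
          _ = ∑ e ∈ E, 2 * (a e).choose 2 := by rw [Finset.mul_sum]
      have hB : ∑ e ∈ E, (r - 1) * (a e - 1) = (r - 1) * r := by
        rw [← Finset.mul_sum, ← hSdef, hSeq]
      rw [hB, Nat.mul_comm (r-1) r] at hlt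
      omega
    have hSm : S = E.card * (r - 2) := by
      calc S = ∑ e ∈ E, (r - 2) :=
          Finset.sum_congr rfl fun e he => by rw [hall e he]; omega
        _ = E.card * (r - 2) := by rw [Finset.sum_const, smul_eq_mul]
    have hmr : E.card * (r - 2) = r := by rw [← hSm, hSeq]
    have hm2 : 2 ≤ E.card := by
      rcases Nat.lt_or_ge E.card 2 with hlt | hge
      · interval_cases hEc : E.card <;> omega
      · exact hge
    have hrle : 2 * (r - 2) ≤ r := by
      calc 2 * (r - 2) ≤ E.card * (r - 2) := Nat.mul_le_mul_right _ hm2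
        _ = r := hmr
    have hr4 : r = 4 := by omega
    have hm2' : E.card = 2 := by rw [hr4] at hmr; omega
    obtain ⟨e1, e2, hne12, hE2⟩ := Finset.card_eq_two.mp hm2'
    have he1 : e1 ∈ E := by rw [hE2]; simp
    have he2 : e2 ∈ E := by rw [hE2]; simp
    have ha1 : a e1 = 3 := by rw [hall e1 he1, hr4]
    have ha2' : a e2 = 3 := by rw [hall e2 he2, hr4]
    -- the two traces intersect in ≥ 2 vertices
    have hun : (e1 ∩ h) ∪ (e2 ∩ h) ⊆ h :=
      Finset.union_subset Finset.inter_subset_right Finset.inter_subset_right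
    have hcu : ((e1 ∩ h) ∪ (e2 ∩ h)).card ≤ 4 := by
      calc ((e1 ∩ h) ∪ (e2 ∩ h)).card ≤ h.card := Finset.card_le_card hun
        _ = 4 := by rw [hcard, hr4]
    have hci := Finset.card_union_add_card_inter (e1 ∩ h) (e2 ∩ h)
    have hiAA : 2 ≤ ((e1 ∩ h) ∩ (e2 ∩ h)).card := by
      simp only [ha] at ha1 ha2'
      omega
    obtain ⟨p, hpsub, hpc⟩ := Finset.exists_subset_card_eq hiAA
    have hp1 : p ∈ g e1 := Finset.mem_powersetCard.mpr
      ⟨hpsub.trans Finset.inter_subset_left, hpc⟩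
    have hp2' : p ∈ g e2 := Finset.mem_powersetCard.mpr
      ⟨hpsub.trans Finset.inter_subset_right, hpc⟩
    have hginter : 1 ≤ (g e1 ∩ g e2).card :=
      Finset.card_pos.mpr ⟨p, Finset.mem_inter.mpr ⟨hp1, hp2'⟩⟩
    have hgc1 : (g e1).card = 3 := by rw [hgcard, ha1]; decide
    have hgc2 : (g e2).card = 3 := by rw [hgcard, ha2']; decide
    have hgu := Finset.card_union_add_card_inter (g e1) (g e2)
    have hguc : (g e1 ∪ g e2).card ≤ 5 := by omega
    have hPsub2 : P ⊆ g e1 ∪ g e2 := by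
      rw [hE2] at hPsub
      simpa using hPsub
    have hP6 : P.card = 6 := by rw [hPcard, hr4]; decide
    have := Finset.card_le_card hPsub2
    omega
  have hS' : r + 1 ≤ S := by omega
  -- construct C
  refine ⟨⟨E.sup id, E, fun e he => Finset.le_sup (f := id) he⟩, hEmem, rfl, ?_, ?_, ?_⟩
  · -- connected
    constructor
    · have hPne : P.Nonempty := by
        rw [← Finset.card_pos, hPcard]
        exact Nat.choose_pos (by omega)
      obtain ⟨p, hp⟩ := hPne
      have hfpE : f p ∈ E := Finset.mem_image_of_mem f hp
      have hfpne : (f p).Nonempty := Finset.card_pos.mp (by rw [hEcard _ hfpE]; omega)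
      obtain ⟨v, hv⟩ := hfpne
      exact ⟨v, Finset.mem_sup.mpr ⟨f p, hfpE, hv⟩⟩
    · intro u hu' v hv'
      set C : FinHypergraph V := ⟨E.sup id, E, fun e he => Finset.le_sup (f := id) he⟩
      have hreach_h : ∀ x ∈ h, ∀ y ∈ h, C.assoc.Reachable x y := by
        intro x hx y hy
        by_cases hxy : x = y
        · subst hxy; exact SimpleGraph.Reachable.refl x
        · apply SimpleGraph.Adj.reachable
          have hpm : ({x, y} : Finset V) ∈ P := by
            rw [hP, Finset.mem_powersetCard]
            exact ⟨by simp [Finset.insert_subset_iff, hx, hy], Finset.card_pair hxy⟩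
          refine ⟨hxy, f {x, y}, Finset.mem_image_of_mem f hpm, ?_, ?_⟩
          · exact hf2 _ hpm (by simp)
          · exact hf2 _ hpm (by simp)
      have hvr : ∀ w ∈ C.verts, ∃ x ∈ h, C.assoc.Reachable w x := by
        intro w hw
        obtain ⟨e, he, hwe⟩ := Finset.mem_sup.mp hw
        have h2a : 1 < (e ∩ h).card := ha2 e he
        obtain ⟨x, hx', hxne⟩ := Finset.exists_mem_ne h2a w
        refine ⟨x, (Finset.mem_inter.mp hx').2, SimpleGraph.Adj.reachable ?_⟩
        exact ⟨hxne.symm, e, he, hwe, (Finset.mem_inter.mp hx').1⟩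
      obtain ⟨x, hx, hru⟩ := hvr u hu'
      obtain ⟨y, hy, hrv⟩ := hvr v hv'
      exact hru.trans ((hreach_h x hx y hy).trans hrv.symm)
  · -- size bound
    calc E.card ≤ P.card := Finset.card_image_le
      _ = r.choose 2 := hPcard
  · -- nullity
    show (2 : ℤ) ≤ ((r : ℤ) - 1) * E.card + 1 - (E.sup id).card
    have hvsub : E.sup id ⊆ h ∪ E.biUnion (fun e => e \ h) := by
      intro v hv
      obtain ⟨e, he, hve⟩ := Finset.mem_sup.mp hv
      by_cases hvh : v ∈ h
      · exact Finset.mem_union_left _ hvh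
      · exact Finset.mem_union_right _
          (Finset.mem_biUnion.mpr ⟨e, he, Finset.mem_sdiff.mpr ⟨hve, hvh⟩⟩)
    have hsd : ∀ e ∈ E, (e \ h).card = r - a e := by
      intro e he
      have h5 := Finset.card_sdiff_add_card_inter e h
      have h6 := hEcard e he
      simp only [ha]
      omega
    have hvb : (E.sup id).card ≤ r + ∑ e ∈ E, (r - a e) := by
      calc (E.sup id).card ≤ (h ∪ E.biUnion (fun e => e \ h)).card :=
            Finset.card_le_card hvsub
        _ ≤ h.card + (E.biUnion (fun e => e \ h)).card := Finset.card_union_le _ _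
        _ ≤ r + ∑ e ∈ E, (e \ h).card := by
            rw [hcard]
            exact Nat.add_le_add_left Finset.card_biUnion_le r
        _ = r + ∑ e ∈ E, (r - a e) :=
            congrArg (r + ·) (Finset.sum_congr rfl hsd)
    have e1 : ((r : ℤ) - 1) * E.card = ∑ _e ∈ E, ((r : ℤ) - 1) := by
      rw [Finset.sum_const, nsmul_eq_mul]; ring
    have e2 : ((E.sup id).card : ℤ) ≤ (r : ℤ) + ∑ e ∈ E, ((r : ℤ) - a e) := by
      calc ((E.sup id).card : ℤ) ≤ ((r + ∑ e ∈ E, (r - a e) : ℕ) : ℤ) := by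
            exact_mod_cast hvb
        _ = (r : ℤ) + ∑ e ∈ E, ((r : ℤ) - a e) := by
            rw [Nat.cast_add, Nat.cast_sum]
            congr 1
            exact Finset.sum_congr rfl fun e he => by
              have := haub e he; omega
    have e3 : ∑ _e ∈ E, ((r : ℤ) - 1) - ∑ e ∈ E, ((r : ℤ) - a e)
        = ∑ e ∈ E, ((a e : ℤ) - 1) := by
      rw [← Finset.sum_sub_distrib]
      exact Finset.sum_congr rfl fun e _ => by ring
    have e4 : (r : ℤ) + 1 ≤ ∑ e ∈ E, ((a e : ℤ) - 1) := by
      calc (r : ℤ) + 1 = ((r + 1 : ℕ) : ℤ) := by push_cast; ring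
        _ ≤ ((S : ℕ) : ℤ) := by exact_mod_cast hS'
        _ = ∑ e ∈ E, ((a e : ℤ) - 1) := by
            rw [hSdef, Nat.cast_sum]
            exact Finset.sum_congr rfl fun e he => by
              have := ha2 e he; omega
    linarith
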